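/- Let k₁, k₂, γ be real numbers with k₁ > 0, k₂ > 0, γ > 0, and let ξ₁, ξ₂, d : ℝ → ℝ satisfy, for every t: ξ₁'(t) = ξ₂(t), ξ₂'(t) = −(1 + k₁k₂)·ξ₁(t) − (k₁ + k₂)·ξ₂(t) + d(t), and d'(t) = −γ·(k₁·ξ₁(t) + ξ₂(t)) (derivatives in the sense of HasDerivAt). Then ξ₁(t) → 0, ξ₂(t) → 0, and d(t) → 0 as t → ∞. -/

import Mathlib

set_option maxHeartbeats 1000000

open Filter

lemma key_quad (k₁ k₂ γ ε c : ℝ) (hγ : 0 < γ)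
    (hε : 0 < ε) (hε1 : ε ≤ k₁ / 4) (hε2 : ε * (γ + 2 * k₂ ^ 2) ≤ k₂ / 2)
    (hε3 : ε * γ ≤ 1 / 2) (hε4 : ε ≤ 1 / 2)
    (hc : 0 < c) (hc1 : c ≤ k₁) (hc2 : c ≤ k₂ / 2) (hc3 : c ≤ ε * γ)
    (x w z : ℝ) :
    c * (γ * x ^ 2 / 2 + γ * w ^ 2 / 2 + z ^ 2 / 2 - ε * γ * (w * z))
      ≤ γ * (k₁ * x ^ 2 + (k₂ - ε * γ) * w ^ 2 + ε * z ^ 2 - ε * x * z - ε * k₂ * w * z) := by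
  have h1 : ε * x * z ≤ 2 * ε * x ^ 2 + ε * z ^ 2 / 8 := by
    nlinarith [mul_nonneg hε.le (sq_nonneg (4 * x - z))]
  have h2 : ε * k₂ * w * z ≤ 2 * ε * k₂ ^ 2 * w ^ 2 + ε * z ^ 2 / 8 := by
    nlinarith [mul_nonneg hε.le (sq_nonneg (4 * k₂ * w - z))]
  have hDlow : γ * ((k₁ / 2) * x ^ 2 + (k₂ / 2) * w ^ 2 + (3 * ε / 4) * z ^ 2)
      ≤ γ * (k₁ * x ^ 2 + (k₂ - ε * γ) * w ^ 2 + ε * z ^ 2 - ε * x * z - ε * k₂ * w * z) := by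
    apply mul_le_mul_of_nonneg_left _ hγ.le
    have a1 : 0 ≤ (k₁ / 2 - 2 * ε) * x ^ 2 :=
      mul_nonneg (by linarith) (sq_nonneg x)
    have a2 : 0 ≤ (k₂ / 2 - ε * γ - 2 * ε * k₂ ^ 2) * w ^ 2 :=
      mul_nonneg (by nlinarith) (sq_nonneg w)
    nlinarith [a1, a2]
  have hVup : c * (γ * x ^ 2 / 2 + γ * w ^ 2 / 2 + z ^ 2 / 2 - ε * γ * (w * z))
      ≤ c * (γ * x ^ 2 / 2 + 3 * γ * w ^ 2 / 4 + 3 * z ^ 2 / 4) := by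
    apply mul_le_mul_of_nonneg_left _ hc.le
    have b1 : 0 ≤ ε * (γ * w + z) ^ 2 := mul_nonneg hε.le (sq_nonneg _)
    have b2 : 0 ≤ (1 / 2 - ε * γ) * (γ * w ^ 2) :=
      mul_nonneg (by linarith) (mul_nonneg hγ.le (sq_nonneg w))
    have b3 : 0 ≤ (1 / 2 - ε) * z ^ 2 := mul_nonneg (by linarith) (sq_nonneg z)
    nlinarith [b1, b2, b3]
  have hmid : c * (γ * x ^ 2 / 2 + 3 * γ * w ^ 2 / 4 + 3 * z ^ 2 / 4)
      ≤ γ * ((k₁ / 2) * x ^ 2 + (k₂ / 2) * w ^ 2 + (3 * ε / 4) * z ^ 2) := by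
    have m1 : c * (γ * x ^ 2 / 2) ≤ γ * ((k₁ / 2) * x ^ 2) := by
      have : 0 ≤ (k₁ - c) * (γ * x ^ 2) :=
        mul_nonneg (by linarith) (mul_nonneg hγ.le (sq_nonneg x))
      nlinarith [this]
    have m2 : c * (3 * γ * w ^ 2 / 4) ≤ γ * ((k₂ / 2) * w ^ 2) := by
      have : 0 ≤ (k₂ / 2 - c) * (γ * w ^ 2) :=
        mul_nonneg (by linarith) (mul_nonneg hγ.le (sq_nonneg w))
      nlinarith [this, mul_nonneg hc.le (mul_nonneg hγ.le (sq_nonneg w))]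
    have m3 : c * (3 * z ^ 2 / 4) ≤ γ * ((3 * ε / 4) * z ^ 2) := by
      have : 0 ≤ (ε * γ - c) * z ^ 2 := mul_nonneg (by linarith) (sq_nonneg z)
      nlinarith [this]
    linarith
  linarith

lemma key_low (γ ε : ℝ) (hγ : 0 < γ) (hε : 0 < ε)
    (hε3 : ε * γ ≤ 1 / 2) (hε4 : ε ≤ 1 / 2) (x w z : ℝ) :
    (γ / 2) * x ^ 2 + (γ / 4) * w ^ 2 + (1 / 4) * z ^ 2
      ≤ γ * x ^ 2 / 2 + γ * w ^ 2 / 2 + z ^ 2 / 2 - ε * γ * (w * z) := by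
  have b1 : 0 ≤ ε * (γ * w - z) ^ 2 := mul_nonneg hε.le (sq_nonneg _)
  have b2 : 0 ≤ (1 / 2 - ε * γ) * (γ * w ^ 2) :=
    mul_nonneg (by linarith) (mul_nonneg hγ.le (sq_nonneg w))
  have b3 : 0 ≤ (1 / 2 - ε) * z ^ 2 := mul_nonneg (by linarith) (sq_nonneg z)
  nlinarith [b1, b2, b3]

lemma sq_tendsto_zero {f : ℝ → ℝ}
    (h : Tendsto (fun t => (f t) ^ 2) atTop (nhds 0)) :
    Tendsto f atTop (nhds 0) := by
  rw [tendsto_zero_iff_abs_tendsto_zero]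
  have := (Real.continuous_sqrt.tendsto 0).comp h
  simp only [Real.sqrt_zero, Function.comp_def] at this
  have heq : (fun t => Real.sqrt ((f t) ^ 2)) = fun t => |f t| :=
    funext fun t => Real.sqrt_sq_eq_abs _
  rwa [heq] at this

theorem inner_loop_global_asymptotic_stability
    (k₁ k₂ γ : ℝ) (hk₁ : 0 < k₁) (hk₂ : 0 < k₂) (hγ : 0 < γ)
    (ξ₁ ξ₂ d : ℝ → ℝ)
    (hξ₁ : ∀ t, HasDerivAt ξ₁ (ξ₂ t) t)
    (hξ₂ : ∀ t, HasDerivAt ξ₂ (-(1 + k₁ * k₂) * ξ₁ t - (k₁ + k₂) * ξ₂ t + d t) t)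
    (hd : ∀ t, HasDerivAt d (-γ * (k₁ * ξ₁ t + ξ₂ t)) t) :
    Tendsto ξ₁ atTop (nhds 0) ∧ Tendsto ξ₂ atTop (nhds 0) ∧
      Tendsto d atTop (nhds 0) := by
  set ε : ℝ := min (min (k₁ / 4) (k₂ / (2 * (γ + 2 * k₂ ^ 2)))) (min (1 / (2 * γ)) (1 / 2)) with hεdef
  have hden : 0 < 2 * (γ + 2 * k₂ ^ 2) := by positivity
  have hε : 0 < ε :=
    lt_min (lt_min (by positivity) (by positivity)) (lt_min (by positivity) (by norm_num))
  have hε1 : ε ≤ k₁ / 4 := le_trans (min_le_left _ _) (min_le_left _ _)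
  have hε2 : ε * (γ + 2 * k₂ ^ 2) ≤ k₂ / 2 := by
    have ha : ε ≤ k₂ / (2 * (γ + 2 * k₂ ^ 2)) := (min_le_left _ _).trans (min_le_right _ _)
    rw [le_div_iff₀ hden] at ha
    nlinarith [ha]
  have hε3 : ε * γ ≤ 1 / 2 := by
    have ha : ε ≤ 1 / (2 * γ) := (min_le_right _ _).trans (min_le_left _ _)
    rw [le_div_iff₀ (by positivity : (0:ℝ) < 2 * γ)] at ha
    nlinarith [ha]
  have hε4 : ε ≤ 1 / 2 := (min_le_right _ _).trans (min_le_right _ _)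
  set c : ℝ := min (min k₁ (k₂ / 2)) (ε * γ) with hcdef
  have hc : 0 < c := lt_min (lt_min hk₁ (by positivity)) (by positivity)
  have hc1 : c ≤ k₁ := (min_le_left _ _).trans (min_le_left _ _)
  have hc2 : c ≤ k₂ / 2 := (min_le_left _ _).trans (min_le_right _ _)
  have hc3 : c ≤ ε * γ := min_le_right _ _
  set V : ℝ → ℝ := fun t => γ * ξ₁ t ^ 2 / 2 + γ * (ξ₂ t + k₁ * ξ₁ t) ^ 2 / 2
      + d t ^ 2 / 2 - ε * γ * ((ξ₂ t + k₁ * ξ₁ t) * d t) with hVdef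
  have hV : ∀ t, HasDerivAt V
      (-(γ * (k₁ * ξ₁ t ^ 2 + (k₂ - ε * γ) * (ξ₂ t + k₁ * ξ₁ t) ^ 2 + ε * d t ^ 2
        - ε * ξ₁ t * d t - ε * k₂ * (ξ₂ t + k₁ * ξ₁ t) * d t))) t := by
    intro t
    have hw : HasDerivAt (fun t => ξ₂ t + k₁ * ξ₁ t)
        ((-(1 + k₁ * k₂) * ξ₁ t - (k₁ + k₂) * ξ₂ t + d t) + k₁ * ξ₂ t) t :=
      (hξ₂ t).add ((hξ₁ t).const_mul k₁)
    have h1 := (((hξ₁ t).pow 2).const_mul γ).div_const 2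
    have h2 := ((hw.pow 2).const_mul γ).div_const 2
    have h3 := ((hd t).pow 2).div_const 2
    have h4 := (hw.mul (hd t)).const_mul (ε * γ)
    have h5 := ((h1.add h2).add h3).sub h4
    refine h5.congr_deriv ?_
    push_cast
    ring
  have hkey : ∀ t, -(γ * (k₁ * ξ₁ t ^ 2 + (k₂ - ε * γ) * (ξ₂ t + k₁ * ξ₁ t) ^ 2
      + ε * d t ^ 2 - ε * ξ₁ t * d t
      - ε * k₂ * (ξ₂ t + k₁ * ξ₁ t) * d t)) ≤ -c * V t := by
    intro t
    have h := key_quad k₁ k₂ γ ε c hγ hε hε1 hε2 hε3 hε4 hc hc1 hc2 hc3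
      (ξ₁ t) (ξ₂ t + k₁ * ξ₁ t) (d t)
    simp only [hVdef]
    linarith
  set g : ℝ → ℝ := fun t => V t * Real.exp (c * t) with hgdef
  have he : ∀ t : ℝ, HasDerivAt (fun s : ℝ => Real.exp (c * s)) (Real.exp (c * t) * c) t := by
    intro t
    simpa using ((hasDerivAt_id t).const_mul c).exp
  have hgd : ∀ t, HasDerivAt g
      ((-(γ * (k₁ * ξ₁ t ^ 2 + (k₂ - ε * γ) * (ξ₂ t + k₁ * ξ₁ t) ^ 2 + ε * d t ^ 2
        - ε * ξ₁ t * d t - ε * k₂ * (ξ₂ t + k₁ * ξ₁ t) * d t))) * Real.exp (c * t)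
        + V t * (Real.exp (c * t) * c)) t := fun t => (hV t).mul (he t)
  have hganti : Antitone g := by
    apply antitone_of_deriv_nonpos (fun t => (hgd t).differentiableAt)
    intro t
    rw [(hgd t).deriv]
    have h0 := hkey t
    have hE := (Real.exp_pos (c * t)).le
    nlinarith [mul_nonneg (by linarith : (0:ℝ) ≤
      γ * (k₁ * ξ₁ t ^ 2 + (k₂ - ε * γ) * (ξ₂ t + k₁ * ξ₁ t) ^ 2 + ε * d t ^ 2
        - ε * ξ₁ t * d t - ε * k₂ * (ξ₂ t + k₁ * ξ₁ t) * d t) - c * V t) hE]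
  have hVlow : ∀ t, (γ / 2) * ξ₁ t ^ 2 + (γ / 4) * (ξ₂ t + k₁ * ξ₁ t) ^ 2
      + (1 / 4) * d t ^ 2 ≤ V t := fun t =>
    key_low γ ε hγ hε hε3 hε4 (ξ₁ t) (ξ₂ t + k₁ * ξ₁ t) (d t)
  have hV0 : ∀ t, 0 ≤ V t := fun t => le_trans (by positivity) (hVlow t)
  have hVexp : ∀ t : ℝ, 0 ≤ t → V t ≤ V 0 * Real.exp (-(c * t)) := by
    intro t ht
    have h := hganti ht
    simp only [hgdef] at h
    rw [Real.exp_neg, mul_comm (V 0), ← div_eq_inv_mul, le_div_iff₀ (Real.exp_pos _)]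
    calc V t * Real.exp (c * t) ≤ V 0 * Real.exp (c * 0) := h
    _ = V 0 := by simp
  have hbound : Tendsto (fun t => V 0 * Real.exp (-(c * t))) atTop (nhds 0) := by
    have h1 : Tendsto (fun t : ℝ => -(c * t)) atTop atBot :=
      tendsto_neg_atTop_atBot.comp (Tendsto.const_mul_atTop hc tendsto_id)
    have h2 := Real.tendsto_exp_atBot.comp h1
    simpa using h2.const_mul (V 0)
  have hVtend : Tendsto V atTop (nhds 0) :=
    squeeze_zero' (Eventually.of_forall hV0)
      ((eventually_ge_atTop (0:ℝ)).mono fun t ht => hVexp t ht) hbound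
  have hsq : ∀ (a : ℝ) (f : ℝ → ℝ), 0 < a → (∀ t, a * f t ^ 2 ≤ V t) →
      Tendsto f atTop (nhds 0) := by
    intro a f ha hf
    apply sq_tendsto_zero
    have hg0 : Tendsto (fun t => V t / a) atTop (nhds 0) := by
      simpa using hVtend.div_const a
    exact squeeze_zero (fun t => sq_nonneg _)
      (fun t => by rw [le_div_iff₀ ha]; nlinarith [hf t]) hg0
  have hx : Tendsto ξ₁ atTop (nhds 0) := by
    refine hsq (γ / 2) ξ₁ (by positivity) fun t => ?_
    nlinarith [hVlow t, sq_nonneg (ξ₂ t + k₁ * ξ₁ t), sq_nonneg (d t), hγ.le]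
  have hwten : Tendsto (fun t => ξ₂ t + k₁ * ξ₁ t) atTop (nhds 0) := by
    refine hsq (γ / 4) _ (by positivity) fun t => ?_
    nlinarith [hVlow t, sq_nonneg (ξ₁ t), sq_nonneg (d t), hγ.le]
  have hz : Tendsto d atTop (nhds 0) := by
    refine hsq (1 / 4) d (by norm_num) fun t => ?_
    nlinarith [hVlow t, sq_nonneg (ξ₁ t), sq_nonneg (ξ₂ t + k₁ * ξ₁ t), hγ.le]
  refine ⟨hx, ?_, hz⟩
  have h := hwten.sub (hx.const_mul k₁)
  simp only [mul_zero, sub_zero] at h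
  convert h using 2 with t
  ring
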